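/- The Haar wavelet function is anti-periodic with respect to 2-adic units: for every ξ ∈ ℚ_2 with ‖ξ‖_2 = 1 and every x ∈ ℚ_2, ψ⁰(x + ξ) = −ψ⁰(x). -/

import Mathlib

/-- The refinable function: the indicator of `ℤ_2` inside `ℚ_[2]`. -/
noncomputable def phi2 : ℚ_[2] → ℂ :=
  Set.indicator {x : ℚ_[2] | ‖x‖ ≤ 1} 1

/-- The 2-adic Haar wavelet function `ψ⁰(x) = φ(x/2) − φ(x/2 − 1/2)`. -/
noncomputable def psi0 : ℚ_[2] → ℂ :=
  fun x => phi2 (x / 2) - phi2 (x / 2 - 1 / 2)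

lemma phi2_add_int (y z : ℚ_[2]) (hz : ‖z‖ ≤ 1) : phi2 (y + z) = phi2 y := by
  unfold phi2
  have : (y + z ∈ {x : ℚ_[2] | ‖x‖ ≤ 1}) ↔ (y ∈ {x : ℚ_[2] | ‖x‖ ≤ 1}) := by
    simp only [Set.mem_setOf_eq]
    constructor
    · intro h
      have : ‖y + z + (-z)‖ ≤ max ‖y + z‖ ‖-z‖ := Padic.nonarchimedean _ _
      simpa using this.trans (max_le h (by simpa using hz))
    · intro h
      exact (Padic.nonarchimedean y z).trans (max_le h hz)
  by_cases h : y ∈ {x : ℚ_[2] | ‖x‖ ≤ 1}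
  · rw [Set.indicator_of_mem (this.mpr h), Set.indicator_of_mem h]; simp
  · rw [Set.indicator_of_notMem (fun hh => h (this.mp hh)), Set.indicator_of_notMem h]

lemma unit_sub_one_half (ξ : ℚ_[2]) (hξ : ‖ξ‖ = 1) : ‖(ξ - 1) / 2‖ ≤ 1 := by
  set a : ℤ_[2] := ⟨ξ, hξ.le⟩ with ha
  have hu : IsUnit a := PadicInt.isUnit_iff.mpr hξ
  have h2 : (2 : ℤ_[2]) ∣ a - 1 := by
    have hall : ∀ u : ZMod 2, IsUnit u → u = 1 := by decide
    have h1 : (PadicInt.toZMod a : ZMod 2) = 1 :=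
      hall _ (hu.map (PadicInt.toZMod (p := 2)))
    have hker : PadicInt.toZMod (a - 1) = 0 := by
      rw [map_sub, map_one, h1, sub_self]
    have hmem : a - 1 ∈ RingHom.ker (PadicInt.toZMod (p := 2)) := hker
    rw [PadicInt.ker_toZMod, PadicInt.maximalIdeal_eq_span_p,
      Ideal.mem_span_singleton] at hmem
    exact_mod_cast hmem
  have hle : ‖a - 1‖ ≤ (2 : ℝ)⁻¹ := by
    obtain ⟨b, hb⟩ := h2
    rw [hb, norm_mul]
    have : ‖(2 : ℤ_[2])‖ = (2 : ℝ)⁻¹ := by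
      simpa using PadicInt.norm_p (p := 2)
    rw [this]
    calc (2:ℝ)⁻¹ * ‖b‖ ≤ (2:ℝ)⁻¹ * 1 := by
          exact mul_le_mul_of_nonneg_left b.norm_le_one (by norm_num)
      _ = (2:ℝ)⁻¹ := mul_one _
  have hcoe : ‖ξ - 1‖ ≤ (2 : ℝ)⁻¹ := by
    have : ((a - 1 : ℤ_[2]) : ℚ_[2]) = ξ - 1 := by rw [PadicInt.coe_sub, PadicInt.coe_one]
    rw [← this]; simpa [PadicInt.norm_def] using hle
  have h2norm : ‖(2 : ℚ_[2])‖ = (2 : ℝ)⁻¹ := by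
    simpa using Padic.norm_p (p := 2)
  rw [norm_div, h2norm, div_le_one (by norm_num)]
  simpa using hcoe

theorem haar_wavelet_antiperiodic (ξ : ℚ_[2]) (hξ : ‖ξ‖ = 1) (x : ℚ_[2]) :
    psi0 (x + ξ) = -psi0 x := by
  have hw := unit_sub_one_half ξ hξ
  set w : ℚ_[2] := (ξ - 1) / 2 with hwdef
  have e1 : (x + ξ) / 2 = (x / 2 + 1 / 2) + w := by rw [hwdef]; ring
  have e2 : (x + ξ) / 2 - 1 / 2 = x / 2 + w := by rw [hwdef]; ring
  unfold psi0
  rw [e2, e1, phi2_add_int _ _ hw, phi2_add_int _ _ hw]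
  have e3 : x / 2 + 1 / 2 = (x / 2 - 1 / 2) + 1 := by ring
  rw [e3, phi2_add_int _ _ (by norm_num)]
  ring
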